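/- Let a < b in M ∪ {−∞,+∞} and let S ⊆ (a,b) be definable. Suppose S is invariant under the coset equivalence relation, i.e., for every x ∈ S and q ∈ Q with x + q ∈ (a,b) we have x + q ∈ S. If S is large, then (a,b) ∖ S is small. -/

import Mathlib

set_option linter.unusedSectionVars false
set_option maxHeartbeats 1000000


open FirstOrder Language Set

/-- Functions of the language of ordered `F`-vector spaces with a predicate:
`+`, `-`, `0`, `1`, and scalar multiplication by each element of `F`. -/
inductive LPFunc (F : Type) : ℕ → Type
  | add : LPFunc F 2
  | neg : LPFunc F 1
  | zero : LPFunc F 0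
  | one : LPFunc F 0
  | smul : F → LPFunc F 1

/-- Relations: the order `<` and the unary predicate `Q`. -/
inductive LPRel : ℕ → Type
  | lt : LPRel 2
  | q : LPRel 1

/-- The language `L_P`. -/
def LP (F : Type) : Language := ⟨LPFunc F, LPRel⟩

variable (F M : Type) [Field F] [LinearOrder F] [IsStrictOrderedRing F] [AddCommGroup M] [LinearOrder M] [IsOrderedAddMonoid M] [Module F M]

/-- The natural `L_P`-structure on an ordered `F`-vector space `M` with
distinguished element `one` and predicate `Q`. -/
def LPStruc (one : M) (Q : Set M) : (LP F).Structure M where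
  funMap := fun {n} f x =>
    match n, f with
    | _, LPFunc.add => x 0 + x 1
    | _, LPFunc.neg => -(x 0)
    | _, LPFunc.zero => 0
    | _, LPFunc.one => one
    | _, LPFunc.smul c => c • x 0
  RelMap := fun {n} r x =>
    match n, r with
    | _, LPRel.lt => x 0 < x 1
    | _, LPRel.q => x 0 ∈ Q

/-- A subset of `N^n` is definable (with parameters from `N`). -/
def DefinableIn (L : Language) (N : Type) [L.Structure N] {n : ℕ} (S : Set (Fin n → N)) : Prop :=
  Set.Definable (Set.univ : Set N) L S

/-- A subset of `N` is definable (with parameters from `N`). -/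
def Definable1In (L : Language) (N : Type) [L.Structure N] (S : Set N) : Prop :=
  DefinableIn L N {x : Fin 1 → N | x 0 ∈ S}

/-- A function `N^n → N` is definable if its graph is definable. -/
def DefinableFunIn (L : Language) (N : Type) [L.Structure N] {n : ℕ}
    (f : (Fin n → N) → N) : Prop :=
  DefinableIn L N {x : Fin (n + 1) → N | x (Fin.last n) = f (fun i => x (Fin.castSucc i))}

/-- `S ⊆ N` is `P`-small: covered by the image of `Pⁿ` under a definable function. -/
def SmallIn (L : Language) (N : Type) [L.Structure N] (P : Set N) (S : Set N) : Prop :=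
  ∃ (n : ℕ) (f : (Fin n → N) → N), DefinableFunIn L N f ∧
    S ⊆ f '' {x : Fin n → N | ∀ i, x i ∈ P}

/-- Definability in the pair of ordered vector spaces. -/
def POVSDefinable (one : M) (Q : Set M) {n : ℕ} (S : Set (Fin n → M)) : Prop :=
  letI := LPStruc F M one Q
  DefinableIn (LP F) M S

/-- Definability of a unary set in the pair of ordered vector spaces. -/
def POVSDefinable1 (one : M) (Q : Set M) (S : Set M) : Prop :=
  letI := LPStruc F M one Q
  Definable1In (LP F) M S

/-- Smallness in the pair of ordered vector spaces. -/
def POVSSmall (one : M) (Q : Set M) (S : Set M) : Prop :=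
  letI := LPStruc F M one Q
  SmallIn (LP F) M Q S

/-- The embedding of `M` into `M ∪ {-∞, +∞}`. -/
def toExt (x : M) : WithBot (WithTop M) := ((x : WithTop M) : WithBot (WithTop M))

/-- The open interval `(a,b)` with endpoints from `M ∪ {-∞, +∞}`, as a subset of `M`. -/
def extIoo (a b : WithBot (WithTop M)) : Set M := {x : M | a < toExt M x ∧ toExt M x < b}

/-- The union of the cosets `c + Q` for `c ∈ C`. -/
def cosetUnion (Q : Set M) (C : Finset M) : Set M := ⋃ c ∈ C, {x : M | x - c ∈ Q}

/-- A near-interval: a nonempty set of the form `(a,b) ∩ C` or `(a,b) \ C`, where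
`a < b` in `M ∪ {-∞,+∞}` and `C` is a finite union of cosets of `Q`. -/
def NearInterval (Q : Set M) (S : Set M) : Prop :=
  S.Nonempty ∧ ∃ (a b : WithBot (WithTop M)) (C : Finset M), a < b ∧
    (S = extIoo M a b ∩ cosetUnion M Q C ∨ S = extIoo M a b \ cosetUnion M Q C)

namespace Stmt6

variable {F M : Type} [Field F] [LinearOrder F] [IsStrictOrderedRing F] [AddCommGroup M] [LinearOrder M] [IsOrderedAddMonoid M] [Module F M]

section OrderFacts

theorem smul_pos'' (hsmul : ∀ (c : F) (x : M), 0 < c → 0 < x → 0 < c • x)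
    {c : F} (hc : 0 < c) {x y : M} (h : x < y) : c • x < c • y := by
  have h2 := hsmul c (y - x) hc (sub_pos.2 h)
  rw [smul_sub] at h2
  exact sub_pos.1 h2

theorem smul_lt_iff' (hsmul : ∀ (c : F) (x : M), 0 < c → 0 < x → 0 < c • x)
    {c : F} (hc : 0 < c) {x y : M} : c • x < c • y ↔ x < y := by
  constructor
  · intro h
    have h2 := smul_pos'' hsmul (inv_pos.2 hc) h
    rwa [smul_smul, smul_smul, inv_mul_cancel₀ (ne_of_gt hc), one_smul, one_smul] at h2
  · exact smul_pos'' hsmul hc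

theorem smul_lt_iff_neg' (hsmul : ∀ (c : F) (x : M), 0 < c → 0 < x → 0 < c • x)
    {c : F} (hc : c < 0) {x y : M} : c • x < c • y ↔ y < x := by
  have h1 : (0:F) < -c := by linarith
  have h2 := smul_lt_iff' hsmul h1 (x := y) (y := x)
  rw [neg_smul, neg_smul, neg_lt_neg_iff] at h2
  exact h2

end OrderFacts

/-! ### Affine forms -/

structure Aff (F M ι : Type) where
  coef : ι → F
  const : M

namespace Aff

variable {ι : Type} [Fintype ι]

def eval (a : Aff F M ι) (x : ι → M) : M := (∑ i, a.coef i • x i) + a.const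

def subA (a b : Aff F M ι) : Aff F M ι := ⟨fun i => a.coef i - b.coef i, a.const - b.const⟩

def negA (a : Aff F M ι) : Aff F M ι := ⟨fun i => -a.coef i, -a.const⟩

def smulA (c : F) (a : Aff F M ι) : Aff F M ι := ⟨fun i => c * a.coef i, c • a.const⟩

def addA (a b : Aff F M ι) : Aff F M ι := ⟨fun i => a.coef i + b.coef i, a.const + b.const⟩

def constA (m : M) : Aff F M ι := ⟨fun _ => 0, m⟩

def coordA [DecidableEq ι] (i : ι) : Aff F M ι := ⟨fun j => if j = i then 1 else 0, 0⟩

@[simp] theorem eval_subA (a b : Aff F M ι) (x : ι → M) :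
    (a.subA b).eval x = a.eval x - b.eval x := by
  simp only [eval, subA, sub_smul, Finset.sum_sub_distrib]
  abel

@[simp] theorem eval_negA (a : Aff F M ι) (x : ι → M) : (a.negA).eval x = -a.eval x := by
  simp only [eval, negA, neg_smul]
  rw [Finset.sum_neg_distrib]
  abel

@[simp] theorem eval_addA (a b : Aff F M ι) (x : ι → M) :
    (a.addA b).eval x = a.eval x + b.eval x := by
  simp only [eval, addA, add_smul, Finset.sum_add_distrib]
  abel

@[simp] theorem eval_smulA (c : F) (a : Aff F M ι) (x : ι → M) :
    (a.smulA c).eval x = c • a.eval x := by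
  simp only [eval, smulA, mul_smul, smul_add, Finset.smul_sum]

@[simp] theorem eval_constA (m : M) (x : ι → M) : (constA m : Aff F M ι).eval x = m := by
  simp [eval, constA]

@[simp] theorem eval_coordA [DecidableEq ι] (i : ι) (x : ι → M) :
    (coordA i : Aff F M ι).eval x = x i := by
  simp only [eval, coordA, ite_smul, one_smul, zero_smul, add_zero]
  rw [Finset.sum_ite_eq' Finset.univ i (fun j => x j)]
  simp

/-- Relabel along an equivalence. -/
def remap {ι₂ : Type} (e : ι ≃ ι₂) (a : Aff F M ι) : Aff F M ι₂ :=
  ⟨fun j => a.coef (e.symm j), a.const⟩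

theorem eval_remap {ι₂ : Type} [Fintype ι₂] (e : ι ≃ ι₂) (a : Aff F M ι) (z : ι₂ → M) :
    (a.remap e).eval z = a.eval (z ∘ e) := by
  simp only [eval, remap]
  congr 1
  exact Fintype.sum_equiv e.symm _ _ (fun j => by simp)

end Aff

/-! ### One extra variable -/

def omap {ι : Type} (x : ι → M) (y : M) : Option ι → M := fun o => o.elim y x

@[simp] theorem omap_none {ι : Type} (x : ι → M) (y : M) : omap x y none = y := rfl
@[simp] theorem omap_some {ι : Type} (x : ι → M) (y : M) (i : ι) : omap x y (some i) = x i := rfl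

namespace Aff

variable {ι : Type} [Fintype ι]

def restrict (a : Aff F M (Option ι)) : Aff F M ι := ⟨fun i => a.coef (some i), a.const⟩

def lift (a : Aff F M ι) : Aff F M (Option ι) := ⟨fun o => o.elim 0 a.coef, a.const⟩

@[simp] theorem lift_coef_none (a : Aff F M ι) : (a.lift).coef none = 0 := rfl

theorem evalSplit (a : Aff F M (Option ι)) (x : ι → M) (y : M) :
    a.eval (omap x y) = a.coef none • y + a.restrict.eval x := by
  simp only [eval, Fintype.sum_option, restrict, omap_none, omap_some]
  abel

theorem eval_lift' (a : Aff F M ι) (z : Option ι → M) :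
    (a.lift).eval z = a.eval (fun i => z (some i)) := by
  simp [eval, lift, Fintype.sum_option]

/-- Substitute an affine expression of the other variables for the extra variable. -/
def substE (a : Aff F M (Option ι)) (e : Aff F M ι) : Aff F M ι :=
  ⟨fun i => a.coef (some i) + a.coef none * e.coef i, a.coef none • e.const + a.const⟩

theorem eval_substE (a : Aff F M (Option ι)) (e : Aff F M ι) (x : ι → M) :
    (a.substE e).eval x = a.eval (omap x (e.eval x)) := by
  rw [evalSplit]
  simp only [eval, substE, restrict, add_smul, mul_smul, Finset.sum_add_distrib, smul_add,
    Finset.smul_sum]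
  abel

/-- Substitute an affine expression (which may itself involve the extra variable)
for the extra variable. -/
def substA (a : Aff F M (Option ι)) (E : Aff F M (Option ι)) : Aff F M (Option ι) :=
  ⟨fun o => o.elim (a.coef none * E.coef none)
      (fun i => a.coef (some i) + a.coef none * E.coef (some i)),
    a.coef none • E.const + a.const⟩

theorem eval_substA (a : Aff F M (Option ι)) (E : Aff F M (Option ι)) (z : Option ι → M) :
    (a.substA E).eval z = a.eval (omap (fun i => z (some i)) (E.eval z)) := by
  have h1 : a.eval (omap (fun i => z (some i)) (E.eval z))
      = a.coef none • E.eval z + a.restrict.eval (fun i => z (some i)) := by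
    rw [evalSplit]
  rw [h1]
  simp only [eval, substA, restrict, Fintype.sum_option, Option.elim, add_smul, mul_smul,
    Finset.sum_add_distrib, smul_add, Finset.smul_sum]
  abel

end Aff

end Stmt6
namespace Stmt6

variable {F M : Type} [Field F] [LinearOrder F] [IsStrictOrderedRing F] [AddCommGroup M] [LinearOrder M] [IsOrderedAddMonoid M] [Module F M]
variable {ι : Type} [Fintype ι]

inductive Kind | lt | eq | inQ | ninQ
deriving DecidableEq

structure Lit (F M ι : Type) where
  k : Kind
  a : Aff F M ι

variable (Qs : Set M)

def Lit.holds (l : Lit F M ι) (x : ι → M) : Prop :=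
  match l.k with
  | .lt => l.a.eval x < 0
  | .eq => l.a.eval x = 0
  | .inQ => l.a.eval x ∈ Qs
  | .ninQ => l.a.eval x ∉ Qs

@[simp] theorem holds_lt (a : Aff F M ι) (x : ι → M) :
    Lit.holds Qs ⟨.lt, a⟩ x ↔ a.eval x < 0 := Iff.rfl
@[simp] theorem holds_eq (a : Aff F M ι) (x : ι → M) :
    Lit.holds Qs ⟨.eq, a⟩ x ↔ a.eval x = 0 := Iff.rfl
@[simp] theorem holds_inQ (a : Aff F M ι) (x : ι → M) :
    Lit.holds Qs ⟨.inQ, a⟩ x ↔ a.eval x ∈ Qs := Iff.rfl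
@[simp] theorem holds_ninQ (a : Aff F M ι) (x : ι → M) :
    Lit.holds Qs ⟨.ninQ, a⟩ x ↔ a.eval x ∉ Qs := Iff.rfl

def cellH (c : List (Lit F M ι)) (x : ι → M) : Prop := ∀ l ∈ c, l.holds Qs x

def dnfH (d : List (List (Lit F M ι))) (x : ι → M) : Prop := ∃ c ∈ d, cellH Qs c x

@[simp] theorem cellH_nil (x : ι → M) : cellH Qs ([] : List (Lit F M ι)) x ↔ True := by
  simp [cellH]

@[simp] theorem cellH_cons (l : Lit F M ι) (c : List (Lit F M ι)) (x : ι → M) :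
    cellH Qs (l :: c) x ↔ l.holds Qs x ∧ cellH Qs c x := by
  simp [cellH]

theorem cellH_append (c₁ c₂ : List (Lit F M ι)) (x : ι → M) :
    cellH Qs (c₁ ++ c₂) x ↔ cellH Qs c₁ x ∧ cellH Qs c₂ x := by
  simp [cellH, or_imp, forall_and]

@[simp] theorem dnfH_nil (x : ι → M) : dnfH Qs ([] : List (List (Lit F M ι))) x ↔ False := by
  simp [dnfH]

@[simp] theorem dnfH_cons (c : List (Lit F M ι)) (d : List (List (Lit F M ι))) (x : ι → M) :
    dnfH Qs (c :: d) x ↔ cellH Qs c x ∨ dnfH Qs d x := by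
  simp only [dnfH, List.mem_cons]
  constructor
  · rintro ⟨c', rfl | h, hh⟩
    exacts [Or.inl hh, Or.inr ⟨c', h, hh⟩]
  · rintro (h | ⟨c', h, hh⟩)
    exacts [⟨c, Or.inl rfl, h⟩, ⟨c', Or.inr h, hh⟩]

theorem dnfH_append (d₁ d₂ : List (List (Lit F M ι))) (x : ι → M) :
    dnfH Qs (d₁ ++ d₂) x ↔ dnfH Qs d₁ x ∨ dnfH Qs d₂ x := by
  simp only [dnfH, List.mem_append]
  constructor
  · rintro ⟨c, h | h, hh⟩
    exacts [Or.inl ⟨c, h, hh⟩, Or.inr ⟨c, h, hh⟩]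
  · rintro (⟨c, h, hh⟩ | ⟨c, h, hh⟩)
    exacts [⟨c, Or.inl h, hh⟩, ⟨c, Or.inr h, hh⟩]

variable (F) in
def Good (S : Set (ι → M)) : Prop :=
  ∃ d : List (List (Lit F M ι)), S = {x | dnfH Qs d x}

namespace Good

theorem empty : Good F Qs (∅ : Set (ι → M)) :=
  ⟨[], by ext x; simp⟩

theorem univ : Good F Qs (Set.univ : Set (ι → M)) :=
  ⟨[ [] ], by ext x; simp⟩

theorem union {S T : Set (ι → M)} (hS : Good F Qs S) (hT : Good F Qs T) :
    Good F Qs (S ∪ T) := by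
  obtain ⟨d1, rfl⟩ := hS; obtain ⟨d2, rfl⟩ := hT
  exact ⟨d1 ++ d2, by ext x; simp [dnfH_append]⟩

theorem inter {S T : Set (ι → M)} (hS : Good F Qs S) (hT : Good F Qs T) :
    Good F Qs (S ∩ T) := by
  obtain ⟨d1, rfl⟩ := hS; obtain ⟨d2, rfl⟩ := hT
  refine ⟨d1.flatMap (fun c1 => d2.map (fun c2 => c1 ++ c2)), ?_⟩
  ext x
  simp only [Set.mem_inter_iff, Set.mem_setOf_eq, dnfH, List.mem_flatMap, List.mem_map]
  constructor
  · rintro ⟨⟨c1, hc1, h1⟩, ⟨c2, hc2, h2⟩⟩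
    exact ⟨c1 ++ c2, ⟨c1, hc1, c2, hc2, rfl⟩, (cellH_append Qs c1 c2 x).2 ⟨h1, h2⟩⟩
  · rintro ⟨c, ⟨c1, hc1, c2, hc2, rfl⟩, hc⟩
    rcases (cellH_append Qs c1 c2 x).1 hc with ⟨h1, h2⟩
    exact ⟨⟨c1, hc1, h1⟩, ⟨c2, hc2, h2⟩⟩

end Good

/-- Negation of a literal, as a DNF. -/
def negLit (l : Lit F M ι) : List (List (Lit F M ι)) :=
  match l.k with
  | .lt => [ [⟨.eq, l.a⟩], [⟨.lt, l.a.negA⟩] ]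
  | .eq => [ [⟨.lt, l.a⟩], [⟨.lt, l.a.negA⟩] ]
  | .inQ => [ [⟨.ninQ, l.a⟩] ]
  | .ninQ => [ [⟨.inQ, l.a⟩] ]

theorem negLit_spec (l : Lit F M ι) (x : ι → M) :
    dnfH Qs (negLit l) x ↔ ¬ l.holds Qs x := by
  obtain ⟨k, a⟩ := l
  cases k <;>
    simp only [negLit, dnfH_cons, dnfH_nil, cellH_cons, cellH_nil, and_true, or_false,
      holds_lt, holds_eq, holds_inQ, holds_ninQ, Aff.eval_negA, neg_lt_zero, not_not]
  · constructor
    · rintro (h | h)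
      · rw [h]; exact lt_irrefl 0
      · exact not_lt.2 h.le
    · intro h
      rcases (not_lt.1 h).lt_or_eq with h' | h'
      exacts [Or.inr h', Or.inl h'.symm]
  · exact lt_or_lt_iff_ne

/-- Complement of a cell, as a DNF. -/
def cellCompl (c : List (Lit F M ι)) : List (List (Lit F M ι)) := c.flatMap negLit

theorem cellCompl_spec (c : List (Lit F M ι)) (x : ι → M) :
    dnfH Qs (cellCompl c) x ↔ ¬ cellH Qs c x := by
  simp only [cellCompl, cellH, not_forall]
  constructor
  · rintro ⟨c', hc', h⟩
    rcases List.mem_flatMap.1 hc' with ⟨l, hl, hneg⟩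
    exact ⟨l, hl, (negLit_spec Qs l x).1 ⟨c', hneg, h⟩⟩
  · rintro ⟨l, hl, h⟩
    rcases (negLit_spec Qs l x).2 h with ⟨c', hc', h'⟩
    exact ⟨c', List.mem_flatMap.2 ⟨l, hl, hc'⟩, h'⟩

theorem Good.compl {S : Set (ι → M)} (hS : Good F Qs S) : Good F Qs Sᶜ := by
  obtain ⟨d, rfl⟩ := hS
  induction d with
  | nil =>
    refine ⟨[ [] ], ?_⟩
    ext x; simp
  | cons c d ih =>
    have hc : Good F Qs ({x | cellH Qs c x}ᶜ) :=
      ⟨cellCompl c, by ext x; simp [cellCompl_spec]⟩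
    obtain ⟨d', hd'⟩ := Good.inter Qs hc ih
    refine ⟨d', ?_⟩
    rw [← hd']
    ext x
    simp only [Set.mem_compl_iff, Set.mem_setOf_eq, Set.mem_inter_iff, dnfH_cons, not_or]

theorem Good.remap {ι₂ : Type} [Fintype ι₂] (e : ι ≃ ι₂) {S : Set (ι → M)}
    (hS : Good F Qs S) : Good F Qs {z : ι₂ → M | z ∘ e ∈ S} := by
  obtain ⟨d, rfl⟩ := hS
  refine ⟨d.map (fun c => c.map (fun l => ⟨l.k, l.a.remap e⟩)), ?_⟩
  ext z
  simp only [Set.mem_setOf_eq, dnfH, List.mem_map, cellH]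
  constructor
  · rintro ⟨c, hc, h⟩
    refine ⟨_, ⟨c, hc, rfl⟩, ?_⟩
    rintro l hl
    rcases List.mem_map.1 hl with ⟨l', hl', rfl⟩
    have := h l' hl'
    obtain ⟨k, a⟩ := l'
    cases k <;> simpa [Lit.holds, Aff.eval_remap] using this
  · rintro ⟨c', ⟨c, hc, rfl⟩, h⟩
    refine ⟨c, hc, fun l hl => ?_⟩
    have := h _ (List.mem_map.2 ⟨l, hl, rfl⟩)
    obtain ⟨k, a⟩ := l
    cases k <;> simpa [Lit.holds, Aff.eval_remap] using this

end Stmt6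
namespace Stmt6

variable {F M : Type} [Field F] [LinearOrder F] [IsStrictOrderedRing F] [AddCommGroup M] [LinearOrder M] [IsOrderedAddMonoid M] [Module F M]
variable {ι : Type} [Fintype ι]

section Helpers

theorem add_lt_zero_iff' {a b : M} : a + b < 0 ↔ a < -b := by
  constructor
  · intro h
    have := add_lt_add_right h (-b)
    simpa [add_assoc] using this
  · intro h
    have := add_lt_add_right h b
    rw [add_comm]
    simpa using this

theorem exists_list_max (l : List M) (hl : l ≠ []) : ∃ m ∈ l, ∀ v ∈ l, v ≤ m := by
  induction l with
  | nil => exact absurd rfl hl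
  | cons a t ih =>
    rcases eq_or_ne t [] with rfl | ht
    · exact ⟨a, List.mem_singleton_self a, by
        intro v hv; rw [List.mem_singleton] at hv; exact hv.le⟩
    · obtain ⟨m, hm, hmax⟩ := ih ht
      rcases le_total a m with h | h
      · refine ⟨m, List.mem_cons_of_mem a hm, ?_⟩
        intro v hv
        rcases List.mem_cons.1 hv with rfl | hv
        exacts [h, hmax v hv]
      · refine ⟨a, List.mem_cons_self, ?_⟩
        intro v hv
        rcases List.mem_cons.1 hv with rfl | hv
        exacts [le_refl v, (hmax v hv).trans h]

theorem exists_list_min (l : List M) (hl : l ≠ []) : ∃ m ∈ l, ∀ v ∈ l, m ≤ v := by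
  obtain ⟨m, hm, hmax⟩ := exists_list_max (l.map (fun v => -v)) (by simpa using hl)
  rcases List.mem_map.1 hm with ⟨v, hv, rfl⟩
  refine ⟨v, hv, fun w hw => ?_⟩
  have := hmax (-w) (List.mem_map.2 ⟨w, hw, rfl⟩)
  simpa using this

/-- Given finitely many strict lower and upper bounds which are pairwise compatible,
find a nonempty open interval within all bounds. -/
theorem exists_window (one : M) (hone : 0 < one) (Ls Us : List M)
    (hpair : ∀ l ∈ Ls, ∀ u ∈ Us, l < u) :
    ∃ u₀ v₀ : M, u₀ < v₀ ∧
      ∀ y, u₀ < y → y < v₀ → (∀ l ∈ Ls, l < y) ∧ (∀ u ∈ Us, y < u) := by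
  rcases eq_or_ne Ls [] with rfl | hL <;> rcases eq_or_ne Us [] with rfl | hU
  · exact ⟨0, one, hone, fun y _ _ => ⟨by simp, by simp⟩⟩
  · obtain ⟨m, hm, hmin⟩ := exists_list_min Us hU
    refine ⟨m - one, m, by simpa using hone, fun y h1 h2 => ⟨by simp, ?_⟩⟩
    exact fun u hu => lt_of_lt_of_le h2 (hmin u hu)
  · obtain ⟨m, hm, hmax⟩ := exists_list_max Ls hL
    refine ⟨m, m + one, by simpa using hone, fun y h1 h2 => ⟨?_, by simp⟩⟩
    exact fun l hl => lt_of_le_of_lt (hmax l hl) h1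
  · obtain ⟨mL, hmL, hmax⟩ := exists_list_max Ls hL
    obtain ⟨mU, hmU, hmin⟩ := exists_list_min Us hU
    refine ⟨mL, mU, hpair _ hmL _ hmU, fun y h1 h2 => ⟨?_, ?_⟩⟩
    · exact fun l hl => lt_of_le_of_lt (hmax l hl) h1
    · exact fun u hu => lt_of_lt_of_le h2 (hmin u hu)

end Helpers

section Avoid

variable (Q : Submodule F M)

theorem mem_add_smul_iff {q w : M} (hq : q ∈ Q) (μ : F) :
    μ • q + w ∈ Q ↔ w ∈ Q := by
  constructor
  · intro h
    have := Q.sub_mem h (Q.smul_mem μ hq)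
    simpa using this
  · intro h
    exact Q.add_mem (Q.smul_mem μ hq) h

/-- A nonempty open interval contains a point avoiding finitely many cosets. -/
theorem avoid (hQproper : (Q : Set M) ≠ Set.univ)
    (hQdense : ∀ a b : M, a < b → ∃ q ∈ Q, a < q ∧ q < b)
    (ps : List (F × M)) (hps : ∀ p ∈ ps, p.1 ≠ 0) {u v : M} (huv : u < v) :
    ∃ y, u < y ∧ y < v ∧ ∀ p ∈ ps, p.1 • y + p.2 ∉ (Q : Set M) := by
  obtain ⟨d, hd⟩ : ∃ d, d ∉ (Q : Set M) := by
    by_contra h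
    push_neg at h
    exact hQproper (Set.eq_univ_of_forall h)
  have key : ∃ j ∈ Finset.range (ps.length + 1),
      ∀ p ∈ ps, p.1 • ((j : F) • d) + p.2 ∉ (Q : Set M) := by
    by_contra hcon
    push_neg at hcon
    choose f hf1 hf2 using hcon
    classical
    have hmaps : ∀ j ∈ Finset.range (ps.length + 1),
        (if h : j ∈ Finset.range (ps.length + 1) then f j h else (0, 0)) ∈ ps.toFinset := by
      intro j hj
      rw [dif_pos hj]
      exact List.mem_toFinset.2 (hf1 j hj)
    have hcard : ps.toFinset.card < (Finset.range (ps.length + 1)).card := by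
      rw [Finset.card_range]
      exact Nat.lt_succ_of_le ps.toFinset_card_le
    obtain ⟨i, hi, j, hj, hij, heq⟩ :=
      Finset.exists_ne_map_eq_of_card_lt_of_maps_to hcard hmaps
    rw [dif_pos hi, dif_pos hj] at heq
    set p := f i hi with hp
    have h1 : p.1 • ((i : F) • d) + p.2 ∈ Q := hf2 i hi
    have h2 : p.1 • ((j : F) • d) + p.2 ∈ Q := by rw [heq]; exact hf2 j hj
    have h3 : p.1 • ((i : F) • d) - p.1 • ((j : F) • d) ∈ Q := by
      have := Q.sub_mem h1 h2
      simpa using this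
    have h4 : (p.1 * ((i : F) - (j : F))) • d ∈ Q := by
      rw [mul_smul, sub_smul, smul_sub]
      exact h3
    have h5 : p.1 * ((i : F) - (j : F)) ≠ 0 := by
      refine mul_ne_zero (hps p (hf1 i hi)) ?_
      rw [sub_ne_zero]
      exact_mod_cast fun hc => hij (Nat.cast_injective hc)
    have h6 : d ∈ Q := by
      have := Q.smul_mem (p.1 * ((i : F) - (j : F)))⁻¹ h4
      rwa [smul_smul, inv_mul_cancel₀ h5, one_smul] at this
    exact hd h6
  obtain ⟨j, _, hj⟩ := key
  set w := (j : F) • d with hw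
  obtain ⟨q, hq, h1, h2⟩ := hQdense (u - w) (v - w) (sub_lt_sub_right huv w)
  refine ⟨w + q, ?_, ?_, ?_⟩
  · exact sub_lt_iff_lt_add'.1 h1
  · exact lt_sub_iff_add_lt'.1 h2
  · intro p hp hmem
    have hsplit : p.1 • (w + q) + p.2 = p.1 • q + (p.1 • w + p.2) := by
      rw [smul_add]; abel
    rw [hsplit] at hmem
    rw [SetLike.mem_coe, mem_add_smul_iff Q hq] at hmem
    exact hj p hp (SetLike.mem_coe.2 hmem)

end Avoid

end Stmt6
namespace Stmt6

variable {F M : Type} [Field F] [LinearOrder F] [IsStrictOrderedRing F] [AddCommGroup M] [LinearOrder M] [IsOrderedAddMonoid M] [Module F M]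
variable {ι : Type} [Fintype ι]

section Elim

variable (Qs : Set M)

/-- The upper bound induced by a `lt` literal with positive coefficient
(or lower bound for negative coefficient). -/
def boundAff (l : Lit F M (Option ι)) : Aff F M ι :=
  (l.a.restrict).smulA (-(l.a.coef none)⁻¹)

theorem smul_bound {lam : F} (hlam : lam ≠ 0) (b : M) : lam • ((-lam⁻¹) • b) = -b := by
  rw [smul_smul]
  rw [show lam * -lam⁻¹ = -1 by field_simp]
  simp

theorem holds_lt_pos (hsmul : ∀ (c : F) (x : M), 0 < c → 0 < x → 0 < c • x)
    {l : Lit F M (Option ι)} (hk : l.k = .lt) (hpos : 0 < l.a.coef none)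
    (x : ι → M) (y : M) :
    l.holds Qs (omap x y) ↔ y < (boundAff l).eval x := by
  obtain ⟨k, a⟩ := l
  simp only at hk
  subst hk
  rw [holds_lt, Aff.evalSplit, boundAff, Aff.eval_smulA, add_lt_zero_iff']
  simp only at hpos ⊢
  rw [show -(a.restrict.eval x) = a.coef none • ((-(a.coef none)⁻¹) • a.restrict.eval x) from
    (smul_bound (ne_of_gt hpos) _).symm]
  exact smul_lt_iff' hsmul hpos

theorem holds_lt_neg (hsmul : ∀ (c : F) (x : M), 0 < c → 0 < x → 0 < c • x)
    {l : Lit F M (Option ι)} (hk : l.k = .lt) (hneg : l.a.coef none < 0)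
    (x : ι → M) (y : M) :
    l.holds Qs (omap x y) ↔ (boundAff l).eval x < y := by
  obtain ⟨k, a⟩ := l
  simp only at hk
  subst hk
  rw [holds_lt, Aff.evalSplit, boundAff, Aff.eval_smulA, add_lt_zero_iff']
  simp only at hneg ⊢
  rw [show -(a.restrict.eval x) = a.coef none • ((-(a.coef none)⁻¹) • a.restrict.eval x) from
    (smul_bound (ne_of_lt hneg) _).symm]
  exact smul_lt_iff_neg' hsmul hneg

theorem holds_coef_zero {l : Lit F M (Option ι)} (h0 : l.a.coef none = 0) (x : ι → M) (y : M) :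
    l.holds Qs (omap x y) ↔ Lit.holds Qs ⟨l.k, l.a.restrict⟩ x := by
  obtain ⟨k, a⟩ := l
  simp only at h0
  have he : a.eval (omap x y) = a.restrict.eval x := by
    rw [Aff.evalSplit, h0, zero_smul, zero_add]
  cases k <;> simp [Lit.holds, he]

/-- The cell expressing `∃ y` over a cell, when all equality/`Q` constraints are free of `y`. -/
def elimCell (c : List (Lit F M (Option ι))) : List (Lit F M ι) :=
  ((c.filter (fun l => decide (l.a.coef none = 0))).map
      (fun l => (⟨l.k, l.a.restrict⟩ : Lit F M ι)))
    ++ ((c.filter (fun l => decide (l.k = Kind.lt ∧ l.a.coef none < 0))).flatMap (fun lo =>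
        (c.filter (fun l => decide (l.k = Kind.lt ∧ 0 < l.a.coef none))).map (fun up =>
          (⟨Kind.lt, (boundAff lo).subA (boundAff up)⟩ : Lit F M ι))))

theorem cellH_elimCell_iff (c : List (Lit F M (Option ι))) (x : ι → M) :
    cellH Qs (elimCell c) x ↔
      ((∀ l ∈ c, l.a.coef none = 0 → Lit.holds Qs ⟨l.k, l.a.restrict⟩ x) ∧
       (∀ lo ∈ c, lo.k = Kind.lt → lo.a.coef none < 0 →
        ∀ up ∈ c, up.k = Kind.lt → 0 < up.a.coef none →
          (boundAff lo).eval x < (boundAff up).eval x)) := by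
  rw [elimCell, cellH_append]
  constructor
  · rintro ⟨h1, h2⟩
    constructor
    · intro l hl h0
      exact h1 _ (List.mem_map.2 ⟨l, List.mem_filter.2 ⟨hl, by simp [h0]⟩, rfl⟩)
    · intro lo hlo hk hneg up hup hk' hpos
      have := h2 _ (List.mem_flatMap.2 ⟨lo, List.mem_filter.2 ⟨hlo, by simp [hk, hneg]⟩,
        List.mem_map.2 ⟨up, List.mem_filter.2 ⟨hup, by simp [hk', hpos]⟩, rfl⟩⟩)
      rw [holds_lt (F := F)] at this
      rw [Aff.eval_subA] at this
      exact sub_neg.1 this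
  · rintro ⟨h1, h2⟩
    constructor
    · intro l' hl'
      rcases List.mem_map.1 hl' with ⟨l, hl, rfl⟩
      rcases List.mem_filter.1 hl with ⟨hlc, h0⟩
      simp only [decide_eq_true_eq] at h0
      exact h1 l hlc h0
    · intro l' hl'
      rcases List.mem_flatMap.1 hl' with ⟨lo, hlo, hl'⟩
      rcases List.mem_map.1 hl' with ⟨up, hup, rfl⟩
      rcases List.mem_filter.1 hlo with ⟨hloc, hlo2⟩
      rcases List.mem_filter.1 hup with ⟨hupc, hup2⟩
      simp only [decide_eq_true_eq] at hlo2 hup2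
      rw [holds_lt (F := F), Aff.eval_subA, sub_neg]
      exact h2 lo hloc hlo2.1 hlo2.2 up hupc hup2.1 hup2.2

variable {Qs}

theorem elim_forward (hsmul : ∀ (c : F) (x : M), 0 < c → 0 < x → 0 < c • x)
    {c : List (Lit F M (Option ι))} {x : ι → M} {y : M}
    (hy : cellH Qs c (omap x y)) : cellH Qs (elimCell c) x := by
  rw [cellH_elimCell_iff]
  constructor
  · intro l hl h0
    exact (holds_coef_zero Qs h0 x y).1 (hy l hl)
  · intro lo hlo hk hneg up hup hk' hpos
    have h1 := (holds_lt_neg Qs hsmul hk hneg x y).1 (hy lo hlo)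
    have h2 := (holds_lt_pos Qs hsmul hk' hpos x y).1 (hy up hup)
    exact lt_trans h1 h2

/-- Backward direction over `M`: equality and `inQ` literals must not involve `y`. -/
theorem elim_backward_M (hsmul : ∀ (c : F) (x : M), 0 < c → 0 < x → 0 < c • x)
    {Q : Submodule F M} (hQproper : (Q : Set M) ≠ Set.univ)
    (hQdense : ∀ a b : M, a < b → ∃ q ∈ Q, a < q ∧ q < b)
    (one : M) (hone : 0 < one)
    {c : List (Lit F M (Option ι))}
    (hyp : ∀ l ∈ c, (l.k = Kind.eq ∨ l.k = Kind.inQ) → l.a.coef none = 0)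
    {x : ι → M} (hx : cellH (Q : Set M) (elimCell c) x) :
    ∃ y, cellH (Q : Set M) c (omap x y) := by
  rw [cellH_elimCell_iff] at hx
  obtain ⟨h1, h2⟩ := hx
  -- set up window
  set Ls : List M := ((c.filter (fun l => decide (l.k = Kind.lt ∧ l.a.coef none < 0))).map
    (fun lo => (boundAff lo).eval x)) with hLs
  set Us : List M := ((c.filter (fun l => decide (l.k = Kind.lt ∧ 0 < l.a.coef none))).map
    (fun up => (boundAff up).eval x)) with hUs
  have hpair : ∀ l ∈ Ls, ∀ u ∈ Us, l < u := by
    intro l hl u hu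
    rcases List.mem_map.1 hl with ⟨lo, hlo, rfl⟩
    rcases List.mem_map.1 hu with ⟨up, hup, rfl⟩
    rcases List.mem_filter.1 hlo with ⟨hloc, hlo2⟩
    rcases List.mem_filter.1 hup with ⟨hupc, hup2⟩
    simp only [decide_eq_true_eq] at hlo2 hup2
    exact h2 lo hloc hlo2.1 hlo2.2 up hupc hup2.1 hup2.2
  obtain ⟨u₀, v₀, huv, hwin⟩ := exists_window one hone Ls Us hpair
  -- coset data to avoid
  set ps : List (F × M) := ((c.filter (fun l => decide (l.k = Kind.ninQ ∧ l.a.coef none ≠ 0))).map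
    (fun l => (l.a.coef none, l.a.restrict.eval x))) with hps
  have hps0 : ∀ p ∈ ps, p.1 ≠ 0 := by
    intro p hp
    rcases List.mem_map.1 hp with ⟨l, hl, rfl⟩
    rcases List.mem_filter.1 hl with ⟨-, h⟩
    simp only [decide_eq_true_eq] at h
    exact h.2
  obtain ⟨y, hy1, hy2, hyavoid⟩ := avoid Q hQproper hQdense ps hps0 huv
  obtain ⟨hL, hU⟩ := hwin y hy1 hy2
  refine ⟨y, ?_⟩
  intro l hl
  rcases eq_or_ne (l.a.coef none) 0 with h0 | h0
  · exact (holds_coef_zero _ h0 x y).2 (h1 l hl h0)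
  · -- nonzero coefficient: must be lt or ninQ
    rcases hk : l.k with hlt | heq | hinQ | hninQ
    · rcases lt_or_gt_of_ne h0 with hneg | hpos
      · rw [holds_lt_neg _ hsmul hk hneg x y]
        exact hL _ (List.mem_map.2 ⟨l, List.mem_filter.2 ⟨hl, by simp [hk, hneg]⟩, rfl⟩)
      · rw [holds_lt_pos _ hsmul hk hpos x y]
        exact hU _ (List.mem_map.2 ⟨l, List.mem_filter.2 ⟨hl, by simp [hk, hpos]⟩, rfl⟩)
    · exact absurd (hyp l hl (Or.inl hk)) h0
    · exact absurd (hyp l hl (Or.inr hk)) h0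
    · -- ninQ with nonzero coefficient
      have := hyavoid _ (List.mem_map.2 ⟨l, List.mem_filter.2 ⟨hl, by simp [hk, h0]⟩, rfl⟩)
      obtain ⟨k, a⟩ := l
      simp only at hk
      subst hk
      rw [holds_ninQ, Aff.evalSplit]
      exact this

/-- Backward direction over `Q`: only `lt` literals may involve `y`. -/
theorem elim_backward_Q (hsmul : ∀ (c : F) (x : M), 0 < c → 0 < x → 0 < c • x)
    {Q : Submodule F M}
    (hQdense : ∀ a b : M, a < b → ∃ q ∈ Q, a < q ∧ q < b)
    (one : M) (hone : 0 < one)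
    {c : List (Lit F M (Option ι))}
    (hyp : ∀ l ∈ c, l.k ≠ Kind.lt → l.a.coef none = 0)
    {x : ι → M} (hx : cellH (Q : Set M) (elimCell c) x) :
    ∃ q ∈ (Q : Set M), cellH (Q : Set M) c (omap x q) := by
  rw [cellH_elimCell_iff] at hx
  obtain ⟨h1, h2⟩ := hx
  set Ls : List M := ((c.filter (fun l => decide (l.k = Kind.lt ∧ l.a.coef none < 0))).map
    (fun lo => (boundAff lo).eval x)) with hLs
  set Us : List M := ((c.filter (fun l => decide (l.k = Kind.lt ∧ 0 < l.a.coef none))).map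
    (fun up => (boundAff up).eval x)) with hUs
  have hpair : ∀ l ∈ Ls, ∀ u ∈ Us, l < u := by
    intro l hl u hu
    rcases List.mem_map.1 hl with ⟨lo, hlo, rfl⟩
    rcases List.mem_map.1 hu with ⟨up, hup, rfl⟩
    rcases List.mem_filter.1 hlo with ⟨hloc, hlo2⟩
    rcases List.mem_filter.1 hup with ⟨hupc, hup2⟩
    simp only [decide_eq_true_eq] at hlo2 hup2
    exact h2 lo hloc hlo2.1 hlo2.2 up hupc hup2.1 hup2.2
  obtain ⟨u₀, v₀, huv, hwin⟩ := exists_window one hone Ls Us hpair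
  obtain ⟨q, hqQ, hq1, hq2⟩ := hQdense u₀ v₀ huv
  obtain ⟨hL, hU⟩ := hwin q hq1 hq2
  refine ⟨q, hqQ, ?_⟩
  intro l hl
  rcases eq_or_ne (l.a.coef none) 0 with h0 | h0
  · exact (holds_coef_zero _ h0 x q).2 (h1 l hl h0)
  · rcases hk : l.k with hlt | heq | hinQ | hninQ
    · rcases lt_or_gt_of_ne h0 with hneg | hpos
      · rw [holds_lt_neg _ hsmul hk hneg x q]
        exact hL _ (List.mem_map.2 ⟨l, List.mem_filter.2 ⟨hl, by simp [hk, hneg]⟩, rfl⟩)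
      · rw [holds_lt_pos _ hsmul hk hpos x q]
        exact hU _ (List.mem_map.2 ⟨l, List.mem_filter.2 ⟨hl, by simp [hk, hpos]⟩, rfl⟩)
    · exact absurd (hyp l hl (by simp [hk])) h0
    · exact absurd (hyp l hl (by simp [hk])) h0
    · exact absurd (hyp l hl (by simp [hk])) h0

end Elim

end Stmt6
namespace Stmt6

variable {F M : Type} [Field F] [LinearOrder F] [IsStrictOrderedRing F] [AddCommGroup M] [LinearOrder M] [IsOrderedAddMonoid M] [Module F M]
variable {ι : Type} [Fintype ι]

section ProjCell

theorem solve_eq {lam : F} (h : lam ≠ 0) {y b : M} (heq : lam • y + b = 0) :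
    y = (-lam⁻¹) • b := by
  have h1 : lam • y = -b := add_eq_zero_iff_eq_neg.1 heq
  have h2 : y = lam⁻¹ • (lam • y) := by
    rw [smul_smul, inv_mul_cancel₀ h, one_smul]
  rw [h2, h1, neg_smul, smul_neg]

variable (Qs : Set M)

theorem holds_substE (l : Lit F M (Option ι)) (e : Aff F M ι) (x : ι → M) :
    Lit.holds Qs ⟨l.k, l.a.substE e⟩ x ↔ l.holds Qs (omap x (e.eval x)) := by
  obtain ⟨k, a⟩ := l
  cases k <;> simp [Lit.holds, Aff.eval_substE]

/-- Transform a literal after substituting the parametrization `P` for the variable,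
dropping the new-variable coefficient on `Q`-literals. -/
def qdrop (P : Aff F M (Option ι)) (l : Lit F M (Option ι)) : Lit F M (Option ι) :=
  match l.k with
  | .inQ => ⟨.inQ, ((l.a.substA P).restrict).lift⟩
  | .ninQ => ⟨.ninQ, ((l.a.substA P).restrict).lift⟩
  | k => ⟨k, l.a.substA P⟩

/-- The affine parametrization `y = lam⁻¹ • (q - b(x))` of the coset `lam • y + b(x) ∈ Q`,
as an affine function of `(x, q)`. -/
def pAff (l1 : Lit F M (Option ι)) : Aff F M (Option ι) :=
  Aff.addA ⟨fun o => o.elim (l1.a.coef none)⁻¹ (fun _ => 0), 0⟩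
    ((l1.a.restrict.lift).smulA (-(l1.a.coef none)⁻¹))

theorem pAff_eval (l1 : Lit F M (Option ι)) (x : ι → M) (q : M) :
    (pAff l1).eval (omap x q) =
      (l1.a.coef none)⁻¹ • (q - l1.a.restrict.eval x) := by
  rw [pAff, Aff.eval_addA, Aff.eval_smulA, Aff.eval_lift']
  have h1 : (⟨fun o => o.elim (l1.a.coef none)⁻¹ (fun _ => 0), 0⟩ :
      Aff F M (Option ι)).eval (omap x q) = (l1.a.coef none)⁻¹ • q := by
    rw [Aff.evalSplit]
    simp [Aff.restrict, Aff.eval]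
  rw [h1]
  have h2 : l1.a.restrict.eval (fun i => omap x q (some i)) = l1.a.restrict.eval x := rfl
  rw [h2, smul_sub, neg_smul]
  abel

theorem substA_coef_none (a E : Aff F M (Option ι)) :
    (a.substA E).coef none = a.coef none * E.coef none := rfl

theorem holds_qdrop {Q : Submodule F M} (P : Aff F M (Option ι)) (l : Lit F M (Option ι))
    (x : ι → M) {q : M} (hq : q ∈ Q) :
    Lit.holds (Q : Set M) (qdrop P l) (omap x q) ↔
      l.holds (Q : Set M) (omap x (P.eval (omap x q))) := by
  have heval : (l.a.substA P).eval (omap x q) = l.a.eval (omap x (P.eval (omap x q))) := by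
    rw [Aff.eval_substA]
    rfl
  have hsplit : (l.a.substA P).eval (omap x q) =
      (l.a.substA P).coef none • q + (l.a.substA P).restrict.eval x := Aff.evalSplit _ x q
  have hQiff : ((l.a.substA P).restrict.eval x ∈ Q) ↔
      (l.a.eval (omap x (P.eval (omap x q))) ∈ Q) := by
    rw [← heval, hsplit]
    exact (mem_add_smul_iff Q hq _).symm
  obtain ⟨k, a⟩ := l
  cases k with
  | lt => simp only [qdrop, Lit.holds] at *; rw [heval]
  | eq => simp only [qdrop, Lit.holds] at *; rw [heval]
  | inQ =>
    simp only [qdrop, Lit.holds, Aff.eval_lift'] at *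
    exact hQiff
  | ninQ =>
    simp only [qdrop, Lit.holds, Aff.eval_lift'] at *
    rw [not_iff_not]
    exact hQiff

theorem qdrop_k (P : Aff F M (Option ι)) (l : Lit F M (Option ι)) : (qdrop P l).k = l.k := by
  obtain ⟨k, a⟩ := l
  cases k <;> rfl

theorem case2_iff {Q : Submodule F M} {c : List (Lit F M (Option ι))}
    {l1 : Lit F M (Option ι)} (hl1 : l1 ∈ c) (hk1 : l1.k = Kind.inQ)
    (hlam1 : l1.a.coef none ≠ 0) (x : ι → M) :
    (∃ y, cellH (Q : Set M) c (omap x y)) ↔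
      ∃ q ∈ (Q : Set M), cellH (Q : Set M) (c.map (qdrop (pAff l1))) (omap x q) := by
  constructor
  · rintro ⟨y, hy⟩
    refine ⟨l1.a.eval (omap x y), ?_, ?_⟩
    · have := hy l1 hl1
      obtain ⟨k, a⟩ := l1
      simp only at hk1
      subst hk1
      exact this
    · have hqQ : l1.a.eval (omap x y) ∈ Q := by
        have := hy l1 hl1
        obtain ⟨k, a⟩ := l1
        simp only at hk1
        subst hk1
        exact this
      have hPy : (pAff l1).eval (omap x (l1.a.eval (omap x y))) = y := by
        rw [pAff_eval, Aff.evalSplit]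
        have : l1.a.coef none • y + l1.a.restrict.eval x - l1.a.restrict.eval x
            = l1.a.coef none • y := by abel
        rw [this, smul_smul, inv_mul_cancel₀ hlam1, one_smul]
      intro l' hl'
      rcases List.mem_map.1 hl' with ⟨l, hl, rfl⟩
      rw [holds_qdrop _ _ _ hqQ, hPy]
      exact hy l hl
  · rintro ⟨q, hqQ, hq⟩
    refine ⟨(pAff l1).eval (omap x q), ?_⟩
    intro l hl
    have := hq _ (List.mem_map.2 ⟨l, hl, rfl⟩)
    rw [holds_qdrop _ _ _ hqQ] at this
    exact this

/-- Projection of a cell along `∃ y`. -/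
def projCell (c : List (Lit F M (Option ι))) : List (List (Lit F M ι)) :=
  match c.find? (fun l => decide (l.k = Kind.eq ∧ l.a.coef none ≠ 0)) with
  | some l0 => [c.map (fun l => ⟨l.k, l.a.substE (boundAff l0)⟩)]
  | none =>
    match c.find? (fun l => decide (l.k = Kind.inQ ∧ l.a.coef none ≠ 0)) with
    | some l1 => [elimCell (c.map (qdrop (pAff l1)))]
    | none => [elimCell c]

theorem projCell_spec (hsmul : ∀ (c : F) (x : M), 0 < c → 0 < x → 0 < c • x)
    {Q : Submodule F M} (hQproper : (Q : Set M) ≠ Set.univ)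
    (hQdense : ∀ a b : M, a < b → ∃ q ∈ Q, a < q ∧ q < b)
    (one : M) (hone : 0 < one)
    (c : List (Lit F M (Option ι))) (x : ι → M) :
    (∃ y, cellH (Q : Set M) c (omap x y)) ↔ dnfH (Q : Set M) (projCell c) x := by
  rcases hf0 : c.find? (fun l => decide (l.k = Kind.eq ∧ l.a.coef none ≠ 0)) with _ | l0
  · rcases hf1 : c.find? (fun l => decide (l.k = Kind.inQ ∧ l.a.coef none ≠ 0)) with _ | l1
    · -- case 3 : no equalities, no inQ with nonzero coefficient
      rw [projCell, hf0, hf1]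
      have h0 := List.find?_eq_none.1 hf0
      have h1 := List.find?_eq_none.1 hf1
      rw [dnfH_cons, dnfH_nil, or_false]
      constructor
      · rintro ⟨y, hy⟩
        exact elim_forward hsmul hy
      · intro h
        refine elim_backward_M hsmul hQproper hQdense one hone ?_ h
        intro l hl hk
        by_contra hne
        rcases hk with hk | hk
        · exact absurd (by simp [hk, hne]) (h0 l hl)
        · exact absurd (by simp [hk, hne]) (h1 l hl)
    · -- case 2 : an inQ literal with nonzero coefficient
      rw [projCell, hf0, hf1]
      have h0 := List.find?_eq_none.1 hf0
      have hp1 : l1.k = Kind.inQ ∧ l1.a.coef none ≠ 0 := by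
        have := List.find?_some hf1
        simpa using this
      have hmem1 := List.mem_of_find?_eq_some hf1
      rw [dnfH_cons, dnfH_nil, or_false]
      rw [case2_iff hmem1 hp1.1 hp1.2 x]
      constructor
      · rintro ⟨q, hqQ, hq⟩
        exact elim_forward hsmul hq
      · intro h
        refine elim_backward_Q hsmul hQdense one hone ?_ h
        intro l' hl' hk
        rcases List.mem_map.1 hl' with ⟨l, hl, rfl⟩
        rw [qdrop_k] at hk
        obtain ⟨k, a⟩ := l
        cases k with
        | lt => exact absurd rfl hk
        | eq =>
          simp only [qdrop, substA_coef_none]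
          have : (⟨Kind.eq, a⟩ : Lit F M (Option ι)).a.coef none = 0 := by
            by_contra hne
            exact absurd (by simp [hne]) (h0 _ hl)
          simp only at this
          rw [this, zero_mul]
        | inQ => rfl
        | ninQ => rfl
  · -- case 1 : an equality with nonzero coefficient; substitute
    rw [projCell, hf0]
    have hp0 : l0.k = Kind.eq ∧ l0.a.coef none ≠ 0 := by
      have := List.find?_some hf0
      simpa using this
    have hmem0 := List.mem_of_find?_eq_some hf0
    rw [dnfH_cons, dnfH_nil, or_false]
    constructor
    · rintro ⟨y, hy⟩
      have hy0 := hy l0 hmem0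
      have hyval : y = (boundAff l0).eval x := by
        obtain ⟨k, a⟩ := l0
        obtain ⟨hk, hlam⟩ := hp0
        simp only at hk
        subst hk
        rw [holds_eq, Aff.evalSplit] at hy0
        rw [boundAff, Aff.eval_smulA]
        exact solve_eq hlam hy0
      intro l' hl'
      rcases List.mem_map.1 hl' with ⟨l, hl, rfl⟩
      rw [holds_substE, ← hyval]
      exact hy l hl
    · intro h
      refine ⟨(boundAff l0).eval x, ?_⟩
      intro l hl
      have := h _ (List.mem_map.2 ⟨l, hl, rfl⟩)
      rw [holds_substE] at this
      exact this

/-- `Good` sets are closed under projection. -/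
theorem Good.proj (hsmul : ∀ (c : F) (x : M), 0 < c → 0 < x → 0 < c • x)
    {Q : Submodule F M} (hQproper : (Q : Set M) ≠ Set.univ)
    (hQdense : ∀ a b : M, a < b → ∃ q ∈ Q, a < q ∧ q < b)
    (one : M) (hone : 0 < one)
    {S : Set (Option ι → M)} (hS : Good F (Q : Set M) S) :
    Good F (Q : Set M) {x : ι → M | ∃ y, omap x y ∈ S} := by
  obtain ⟨d, rfl⟩ := hS
  refine ⟨d.flatMap projCell, ?_⟩
  ext x
  simp only [Set.mem_setOf_eq, dnfH]
  constructor
  · rintro ⟨y, c, hc, hcell⟩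
    have := (projCell_spec hsmul hQproper hQdense one hone c x).1 ⟨y, hcell⟩
    rcases this with ⟨c', hc', hcell'⟩
    exact ⟨c', List.mem_flatMap.2 ⟨c, hc, hc'⟩, hcell'⟩
  · rintro ⟨c', hc', hcell'⟩
    rcases List.mem_flatMap.1 hc' with ⟨c, hc, hc'2⟩
    obtain ⟨y, hy⟩ := (projCell_spec hsmul hQproper hQdense one hone c x).2 ⟨c', hc'2, hcell'⟩
    exact ⟨y, c, hc, hy⟩

end ProjCell

end Stmt6
namespace Stmt6

open FirstOrder Language

variable {F M : Type} [Field F] [LinearOrder F] [IsStrictOrderedRing F] [AddCommGroup M] [LinearOrder M] [IsOrderedAddMonoid M] [Module F M]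

/-- Realization of a term in the pair structure. -/
def RealT (one : M) (Qs : Set M) {ι : Type} (t : ((LP F)[[(Set.univ : Set M)]]).Term ι)
    (x : ι → M) : M :=
  letI := LPStruc F M one Qs
  t.realize x

/-- Realization of a bounded formula in the pair structure. -/
def RealBF (one : M) (Qs : Set M) {n : ℕ}
    (φ : ((LP F)[[(Set.univ : Set M)]]).BoundedFormula (Fin 1) n)
    (v : Fin 1 → M) (xs : Fin n → M) : Prop :=
  letI := LPStruc F M one Qs
  φ.Realize v xs

variable (one : M) (Qs : Set M)

theorem term_aff {ι : Type} [Fintype ι] [DecidableEq ι]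
    (t : ((LP F)[[(Set.univ : Set M)]]).Term ι) :
    ∃ a : Aff F M ι, ∀ x : ι → M, RealT one Qs t x = a.eval x := by
  induction t with
  | var i => exact ⟨Aff.coordA i, fun x => by simp [RealT, Term.realize]⟩
  | @func l f ts ih =>
    rcases f with g | cst
    · cases g with
      | add =>
        obtain ⟨a0, h0⟩ := ih 0
        obtain ⟨a1, h1⟩ := ih 1
        refine ⟨a0.addA a1, fun x => ?_⟩
        have : RealT one Qs (Term.func (Sum.inl LPFunc.add) ts) x
            = RealT one Qs (ts 0) x + RealT one Qs (ts 1) x := rfl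
        rw [this, h0, h1, Aff.eval_addA]
      | neg =>
        obtain ⟨a0, h0⟩ := ih 0
        refine ⟨a0.smulA (-1), fun x => ?_⟩
        have : RealT one Qs (Term.func (Sum.inl LPFunc.neg) ts) x
            = -(RealT one Qs (ts 0) x) := rfl
        rw [this, h0, Aff.eval_smulA, neg_one_smul]
      | zero =>
        refine ⟨Aff.constA 0, fun x => ?_⟩
        have : RealT one Qs (Term.func (Sum.inl LPFunc.zero) ts) x = 0 := rfl
        rw [this, Aff.eval_constA]
      | one =>
        refine ⟨Aff.constA one, fun x => ?_⟩
        have : RealT one Qs (Term.func (Sum.inl LPFunc.one) ts) x = one := rfl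
        rw [this, Aff.eval_constA]
      | smul c =>
        obtain ⟨a0, h0⟩ := ih 0
        refine ⟨a0.smulA c, fun x => ?_⟩
        have : RealT one Qs (Term.func (Sum.inl (LPFunc.smul c)) ts) x
            = c • (RealT one Qs (ts 0) x) := rfl
        rw [this, h0, Aff.eval_smulA]
    · cases l with
      | zero =>
        refine ⟨Aff.constA ((cst : ↥(Set.univ : Set M)) : M), fun x => ?_⟩
        have : RealT one Qs (Term.func (Sum.inr cst) ts) x
            = ((cst : ↥(Set.univ : Set M)) : M) := rfl
        rw [this, Aff.eval_constA]
      | succ m => exact isEmptyElim cst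

/-- The index equivalence moving the last bound variable to the `Option` slot. -/
def optEquiv (n : ℕ) : (Fin 1 ⊕ Fin (n + 1)) ≃ Option (Fin 1 ⊕ Fin n) where
  toFun := Sum.elim (fun i => some (Sum.inl i))
    (fun j => Fin.lastCases none (fun k => some (Sum.inr k)) j)
  invFun := fun o => o.elim (Sum.inr (Fin.last n))
    (Sum.elim (fun i => Sum.inl i) (fun k => Sum.inr k.castSucc))
  left_inv := by
    rintro (i | j)
    · rfl
    · refine Fin.lastCases ?_ (fun k => ?_) j
      · simp
      · simp
  right_inv := by
    rintro (_ | (i | k))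
    · show Sum.elim _ _ (Sum.inr (Fin.last n)) = none
      rw [Sum.elim_inr, Fin.lastCases_last]
    · rfl
    · show Sum.elim _ _ (Sum.inr (Fin.castSucc k)) = some (Sum.inr k)
      rw [Sum.elim_inr, Fin.lastCases_castSucc]

theorem bf_good (hsmul : ∀ (c : F) (x : M), 0 < c → 0 < x → 0 < c • x)
    {Q : Submodule F M} (hQproper : (Q : Set M) ≠ Set.univ)
    (hQdense : ∀ a b : M, a < b → ∃ q ∈ Q, a < q ∧ q < b)
    (hone : 0 < one) {n : ℕ}
    (φ : ((LP F)[[(Set.univ : Set M)]]).BoundedFormula (Fin 1) n) :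
    Good F (Q : Set M)
      {f : (Fin 1 ⊕ Fin n) → M | RealBF one (Q : Set M) φ (f ∘ Sum.inl) (f ∘ Sum.inr)} := by
  induction φ with
  | falsum =>
    refine ⟨[], ?_⟩
    ext f
    simp only [Set.mem_setOf_eq, dnfH_nil, iff_false]
    exact fun h => h
  | equal t₁ t₂ =>
    obtain ⟨a₁, h₁⟩ := term_aff one (Q : Set M) t₁
    obtain ⟨a₂, h₂⟩ := term_aff one (Q : Set M) t₂
    refine ⟨[ [⟨Kind.eq, a₁.subA a₂⟩] ], ?_⟩
    ext f
    have hfe : Sum.elim (f ∘ Sum.inl) (f ∘ Sum.inr) = f := Sum.elim_comp_inl_inr f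
    have hreal : RealBF one (Q : Set M) (BoundedFormula.equal t₁ t₂)
        (f ∘ Sum.inl) (f ∘ Sum.inr) ↔
        RealT one (Q : Set M) t₁ f = RealT one (Q : Set M) t₂ f := by
      rw [show (RealBF one (Q : Set M) (BoundedFormula.equal t₁ t₂)
        (f ∘ Sum.inl) (f ∘ Sum.inr)) =
        (RealT one (Q : Set M) t₁ (Sum.elim (f ∘ Sum.inl) (f ∘ Sum.inr)) =
          RealT one (Q : Set M) t₂ (Sum.elim (f ∘ Sum.inl) (f ∘ Sum.inr))) from rfl, hfe]
    simp only [Set.mem_setOf_eq, hreal, h₁, h₂, dnfH_cons, dnfH_nil, or_false,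
      cellH_cons, cellH_nil, and_true, holds_eq, Aff.eval_subA, sub_eq_zero]
  | rel R ts =>
    rcases R with r | r
    · cases r with
      | lt =>
        obtain ⟨a₁, h₁⟩ := term_aff one (Q : Set M) (ts 0)
        obtain ⟨a₂, h₂⟩ := term_aff one (Q : Set M) (ts 1)
        refine ⟨[ [⟨Kind.lt, a₁.subA a₂⟩] ], ?_⟩
        ext f
        have hfe : Sum.elim (f ∘ Sum.inl) (f ∘ Sum.inr) = f := Sum.elim_comp_inl_inr f
        have hreal : RealBF one (Q : Set M) (BoundedFormula.rel (Sum.inl LPRel.lt) ts)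
            (f ∘ Sum.inl) (f ∘ Sum.inr) ↔
            RealT one (Q : Set M) (ts 0) f < RealT one (Q : Set M) (ts 1) f := by
          rw [show (RealBF one (Q : Set M) (BoundedFormula.rel (Sum.inl LPRel.lt) ts)
            (f ∘ Sum.inl) (f ∘ Sum.inr)) =
            (RealT one (Q : Set M) (ts 0) (Sum.elim (f ∘ Sum.inl) (f ∘ Sum.inr)) <
              RealT one (Q : Set M) (ts 1) (Sum.elim (f ∘ Sum.inl) (f ∘ Sum.inr))) from rfl, hfe]
        simp only [Set.mem_setOf_eq, hreal, h₁, h₂, dnfH_cons, dnfH_nil, or_false,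
          cellH_cons, cellH_nil, and_true, holds_lt, Aff.eval_subA, sub_neg]
      | q =>
        obtain ⟨a₁, h₁⟩ := term_aff one (Q : Set M) (ts 0)
        refine ⟨[ [⟨Kind.inQ, a₁⟩] ], ?_⟩
        ext f
        have hfe : Sum.elim (f ∘ Sum.inl) (f ∘ Sum.inr) = f := Sum.elim_comp_inl_inr f
        have hreal : RealBF one (Q : Set M) (BoundedFormula.rel (Sum.inl LPRel.q) ts)
            (f ∘ Sum.inl) (f ∘ Sum.inr) ↔
            RealT one (Q : Set M) (ts 0) f ∈ (Q : Set M) := by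
          rw [show (RealBF one (Q : Set M) (BoundedFormula.rel (Sum.inl LPRel.q) ts)
            (f ∘ Sum.inl) (f ∘ Sum.inr)) =
            (RealT one (Q : Set M) (ts 0) (Sum.elim (f ∘ Sum.inl) (f ∘ Sum.inr)) ∈
              (Q : Set M)) from rfl, hfe]
        simp only [Set.mem_setOf_eq, hreal, h₁, dnfH_cons, dnfH_nil, or_false,
          cellH_cons, cellH_nil, and_true, holds_inQ]
    · exact isEmptyElim r
  | imp φ ψ ihφ ihψ =>
    have h : {f : (Fin 1 ⊕ Fin _) → M |
        RealBF one (Q : Set M) (φ.imp ψ) (f ∘ Sum.inl) (f ∘ Sum.inr)} =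
        {f | RealBF one (Q : Set M) φ (f ∘ Sum.inl) (f ∘ Sum.inr)}ᶜ ∪
        {f | RealBF one (Q : Set M) ψ (f ∘ Sum.inl) (f ∘ Sum.inr)} := by
      ext f
      simp only [Set.mem_setOf_eq, Set.mem_union, Set.mem_compl_iff]
      rw [show (RealBF one (Q : Set M) (φ.imp ψ) (f ∘ Sum.inl) (f ∘ Sum.inr)) =
        ((RealBF one (Q : Set M) φ (f ∘ Sum.inl) (f ∘ Sum.inr)) →
          (RealBF one (Q : Set M) ψ (f ∘ Sum.inl) (f ∘ Sum.inr))) from rfl]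
      exact imp_iff_not_or
    rw [h]
    exact Good.union _ (Good.compl _ ihφ) ihψ
  | @all k φ ih =>
    have hU' : Good F (Q : Set M) {h : Option (Fin 1 ⊕ Fin k) → M |
        h ∘ (optEquiv k) ∈ {g : (Fin 1 ⊕ Fin (k + 1)) → M |
          RealBF one (Q : Set M) φ (g ∘ Sum.inl) (g ∘ Sum.inr)}} :=
      Good.remap _ (optEquiv k) ih
    have hW : Good F (Q : Set M) {x : (Fin 1 ⊕ Fin k) → M |
        ∃ y, omap x y ∈ ({h : Option (Fin 1 ⊕ Fin k) → M |
        h ∘ (optEquiv k) ∈ {g : (Fin 1 ⊕ Fin (k + 1)) → M |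
          RealBF one (Q : Set M) φ (g ∘ Sum.inl) (g ∘ Sum.inr)}}ᶜ)} :=
      Good.proj hsmul hQproper hQdense one hone (Good.compl _ hU')
    have hfinal := Good.compl _ hW
    have heq : {f : (Fin 1 ⊕ Fin k) → M |
        RealBF one (Q : Set M) φ.all (f ∘ Sum.inl) (f ∘ Sum.inr)} =
        {x : (Fin 1 ⊕ Fin k) → M |
        ∃ y, omap x y ∈ ({h : Option (Fin 1 ⊕ Fin k) → M |
        h ∘ (optEquiv k) ∈ {g : (Fin 1 ⊕ Fin (k + 1)) → M |
          RealBF one (Q : Set M) φ (g ∘ Sum.inl) (g ∘ Sum.inr)}}ᶜ)}ᶜ := by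
      ext x
      simp only [Set.mem_setOf_eq, Set.mem_compl_iff, not_exists, not_not]
      rw [show (RealBF one (Q : Set M) φ.all (x ∘ Sum.inl) (x ∘ Sum.inr)) =
        (∀ y, RealBF one (Q : Set M) φ (x ∘ Sum.inl) (Fin.snoc (x ∘ Sum.inr) y)) from rfl]
      refine forall_congr' (fun y => ?_)
      have h1 : (omap x y) ∘ (optEquiv k) ∘ Sum.inl = x ∘ Sum.inl := rfl
      have h2 : (omap x y) ∘ (optEquiv k) ∘ Sum.inr = Fin.snoc (x ∘ Sum.inr) y := by
        funext j
        refine Fin.lastCases ?_ (fun i => ?_) j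
        · show omap x y (Fin.lastCases none _ (Fin.last k)) = _
          rw [Fin.lastCases_last, Fin.snoc_last]
          rfl
        · show omap x y (Fin.lastCases none (fun i => some (Sum.inr i)) i.castSucc) = _
          rw [Fin.lastCases_castSucc, Fin.snoc_castSucc]
          rfl
      constructor
      · intro h
        show RealBF one (Q : Set M) φ ((omap x y ∘ (optEquiv k)) ∘ Sum.inl)
          ((omap x y ∘ (optEquiv k)) ∘ Sum.inr)
        rw [show (omap x y ∘ (optEquiv k)) ∘ Sum.inl = x ∘ Sum.inl from h1,
          show (omap x y ∘ (optEquiv k)) ∘ Sum.inr = Fin.snoc (x ∘ Sum.inr) y from h2]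
        exact h
      · intro h
        have h' : RealBF one (Q : Set M) φ ((omap x y ∘ (optEquiv k)) ∘ Sum.inl)
          ((omap x y ∘ (optEquiv k)) ∘ Sum.inr) := h
        rw [show (omap x y ∘ (optEquiv k)) ∘ Sum.inl = x ∘ Sum.inl from h1,
          show (omap x y ∘ (optEquiv k)) ∘ Sum.inr = Fin.snoc (x ∘ Sum.inr) y from h2] at h'
        exact h'
    rw [heq]
    exact hfinal

end Stmt6
namespace Stmt6

open FirstOrder Language

variable {F M : Type} [Field F] [LinearOrder F] [IsStrictOrderedRing F] [AddCommGroup M] [LinearOrder M] [IsOrderedAddMonoid M] [Module F M]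

theorem small_iff (one : M) (Qs : Set M) (S : Set M) :
    POVSSmall F M one Qs S ↔
      ∃ (n : ℕ) (f : (Fin n → M) → M),
        (letI := LPStruc F M one Qs;
          Set.Definable (Set.univ : Set M) (LP F)
            {x : Fin (n + 1) → M | x (Fin.last n) = f (fun i => x (Fin.castSucc i))}) ∧
        S ⊆ f '' {x : Fin n → M | ∀ i, x i ∈ Qs} :=
  Iff.rfl

theorem small_mono (one : M) (Qs : Set M) {S T : Set M} (hsub : S ⊆ T)
    (hT : POVSSmall F M one Qs T) : POVSSmall F M one Qs S := by
  rw [small_iff] at *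
  obtain ⟨n, f, hf, hc⟩ := hT
  exact ⟨n, f, hf, hsub.trans hc⟩

theorem small_empty (one : M) (Qs : Set M) : POVSSmall F M one Qs (∅ : Set M) := by
  letI := LPStruc F M one Qs
  rw [small_iff]
  refine ⟨0, fun _ => 0, ?_, by simp⟩
  refine ⟨Term.equal (Term.var (Fin.last 0)) (((LP F).con ⟨(0 : M), trivial⟩).term), ?_⟩
  ext x
  simp only [Set.mem_setOf_eq, Formula.realize_equal, Term.realize_var, Term.realize_con]

theorem small_coset (one : M) (Qs : Set M) (c : M) :
    POVSSmall F M one Qs {m | m - c ∈ Qs} := by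
  letI := LPStruc F M one Qs
  rw [small_iff]
  refine ⟨1, fun x => x 0 + c, ?_, ?_⟩
  · refine ⟨Term.equal (Term.var (Fin.last 1))
      (Term.func (Sum.inl LPFunc.add)
        ![Term.var (Fin.castSucc 0), ((LP F).con ⟨c, trivial⟩).term]), ?_⟩
    ext x
    simp only [Set.mem_setOf_eq, Formula.realize_equal, Term.realize_var, Term.realize_func]
    exact Iff.rfl
  · rintro m hm
    exact ⟨fun _ => m - c, fun i => hm, by
      show m - c + c = m
      exact sub_add_cancel m c⟩

theorem small_union (one : M) (Qs : Set M) (h0Q : (0 : M) ∈ Qs) (honeQ : one ∈ Qs)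
    (hone : 0 < one) {S T : Set M} (hS : POVSSmall F M one Qs S)
    (hT : POVSSmall F M one Qs T) : POVSSmall F M one Qs (S ∪ T) := by
  letI := LPStruc F M one Qs
  rw [small_iff] at *
  obtain ⟨nf, f, hf, hfc⟩ := hS
  obtain ⟨ng, g, hg, hgc⟩ := hT
  refine ⟨nf + ng + 1, fun z => if z (Fin.last (nf + ng)) < one
      then f (fun i => z ((i.castAdd ng).castSucc))
      else g (fun i => z ((Fin.natAdd nf i).castSucc)), ?_, ?_⟩
  · set N := nf + ng + 1 with hN
    have hC : Set.Definable (Set.univ : Set M) (LP F)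
        {w : Fin (N + 1) → M | w ((Fin.last (nf + ng)).castSucc) < one} := by
      refine ⟨Relations.formula₂ (Sum.inl LPRel.lt)
        (Term.var ((Fin.last (nf + ng)).castSucc))
        (((LP F).con ⟨one, trivial⟩).term), ?_⟩
      ext w
      simp only [Set.mem_setOf_eq, Formula.realize_rel₂, Term.realize_var, Term.realize_con]
      exact Iff.rfl
    have hA := hf.preimage_comp
      (fun j : Fin (nf + 1) => (Fin.lastCases (Fin.last N)
        (fun i : Fin nf => (((i.castAdd ng).castSucc).castSucc : Fin (N + 1))) j : Fin (N + 1)))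
    have hB := hg.preimage_comp
      (fun j : Fin (ng + 1) => (Fin.lastCases (Fin.last N)
        (fun i : Fin ng => ((((Fin.natAdd nf i)).castSucc).castSucc : Fin (N + 1))) j : Fin (N + 1)))
    have hgoal := (hC.inter hA).union ((hC.compl).inter hB)
    convert hgoal using 1
    ext w
    simp only [Set.mem_setOf_eq, Set.mem_union, Set.mem_inter_iff, Set.mem_compl_iff,
      Set.mem_preimage]
    have huA : ∀ i : Fin nf,
        (w ∘ fun j => Fin.lastCases (Fin.last N)
          (fun i : Fin nf => (((i.castAdd ng).castSucc).castSucc : Fin (N + 1))) j)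
          (Fin.castSucc i) = w (((i.castAdd ng).castSucc).castSucc) := by
      intro i
      show w (Fin.lastCases _ _ (Fin.castSucc i)) = _
      rw [Fin.lastCases_castSucc]
    have hlA : (w ∘ fun j => Fin.lastCases (Fin.last N)
          (fun i : Fin nf => (((i.castAdd ng).castSucc).castSucc : Fin (N + 1))) j)
          (Fin.last nf) = w (Fin.last N) := by
      show w (Fin.lastCases _ _ (Fin.last nf)) = _
      rw [Fin.lastCases_last]
    have huB : ∀ i : Fin ng,
        (w ∘ fun j => Fin.lastCases (Fin.last N)
          (fun i : Fin ng => ((((Fin.natAdd nf i)).castSucc).castSucc : Fin (N + 1))) j)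
          (Fin.castSucc i) = w ((((Fin.natAdd nf i)).castSucc).castSucc) := by
      intro i
      show w (Fin.lastCases _ _ (Fin.castSucc i)) = _
      rw [Fin.lastCases_castSucc]
    have hlB : (w ∘ fun j => Fin.lastCases (Fin.last N)
          (fun i : Fin ng => ((((Fin.natAdd nf i)).castSucc).castSucc : Fin (N + 1))) j)
          (Fin.last ng) = w (Fin.last N) := by
      show w (Fin.lastCases _ _ (Fin.last ng)) = _
      rw [Fin.lastCases_last]
    by_cases hw : w ((Fin.last (nf + ng)).castSucc) < one
    · rw [if_pos (by exact hw)]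
      constructor
      · intro h
        refine Or.inl ⟨hw, ?_⟩
        show _ = f _
        rw [hlA]
        refine h.trans ?_
        congr 1
        funext i
        rw [huA i]
      · rintro (⟨-, h⟩ | ⟨hnw, -⟩)
        · replace h : _ = f _ := h
          rw [hlA] at h
          refine h.trans ?_
          congr 1
          funext i
          rw [huA i]
        · exact absurd hw hnw
    · rw [if_neg (by exact hw)]
      constructor
      · intro h
        refine Or.inr ⟨hw, ?_⟩
        show _ = g _
        rw [hlB]
        refine h.trans ?_
        congr 1
        funext i
        rw [huB i]
      · rintro (⟨hw', -⟩ | ⟨-, h⟩)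
        · exact absurd hw' hw
        · replace h : _ = g _ := h
          rw [hlB] at h
          refine h.trans ?_
          congr 1
          funext i
          rw [huB i]
  · rintro m (hm | hm)
    · obtain ⟨xbar, hxQ, hfx⟩ := hfc hm
      set z : Fin (nf + ng + 1) → M :=
        (Fin.lastCases (0 : M) (Fin.addCases (fun k => xbar k) (fun _ => (0 : M))) :
          Fin (nf + ng + 1) → M) with hz
      refine ⟨z, ?_, ?_⟩
      · intro i
        refine Fin.lastCases ?_ (fun j => ?_) i
        · show z (Fin.last (nf + ng)) ∈ Qs
          rw [hz]
          simp only [Fin.lastCases_last]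
          exact h0Q
        · show z (Fin.castSucc j) ∈ Qs
          rw [hz]
          simp only [Fin.lastCases_castSucc]
          refine Fin.addCases (fun k => ?_) (fun k => ?_) j
          · simp only [Fin.addCases_left]; exact hxQ k
          · simp only [Fin.addCases_right]; exact h0Q
      · have hval : z (Fin.last (nf + ng)) = 0 := by
          rw [hz]; simp only [Fin.lastCases_last]
        have hargs : (fun i => z ((i.castAdd ng).castSucc)) = fun k => xbar k := by
          funext i
          rw [hz]
          simp only [Fin.lastCases_castSucc, Fin.addCases_left]
        show (if z (Fin.last (nf + ng)) < one
            then f (fun i => z ((i.castAdd ng).castSucc))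
            else g (fun i => z ((Fin.natAdd nf i).castSucc))) = m
        rw [hval, if_pos hone, hargs]
        exact hfx
    · obtain ⟨xbar, hxQ, hgx⟩ := hgc hm
      set z : Fin (nf + ng + 1) → M :=
        (Fin.lastCases one (Fin.addCases (fun _ => (0 : M)) (fun k => xbar k)) :
          Fin (nf + ng + 1) → M) with hz
      refine ⟨z, ?_, ?_⟩
      · intro i
        refine Fin.lastCases ?_ (fun j => ?_) i
        · show z (Fin.last (nf + ng)) ∈ Qs
          rw [hz]
          simp only [Fin.lastCases_last]
          exact honeQ
        · show z (Fin.castSucc j) ∈ Qs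
          rw [hz]
          simp only [Fin.lastCases_castSucc]
          refine Fin.addCases (fun k => ?_) (fun k => ?_) j
          · simp only [Fin.addCases_left]; exact h0Q
          · simp only [Fin.addCases_right]; exact hxQ k
      · have hval : z (Fin.last (nf + ng)) = one := by
          rw [hz]; simp only [Fin.lastCases_last]
        have hargs : (fun i => z ((Fin.natAdd nf i).castSucc)) = fun k => xbar k := by
          funext i
          rw [hz]
          simp only [Fin.lastCases_castSucc, Fin.addCases_right]
        show (if z (Fin.last (nf + ng)) < one
            then f (fun i => z ((i.castAdd ng).castSucc))
            else g (fun i => z ((Fin.natAdd nf i).castSucc))) = m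
        rw [hval, if_neg (lt_irrefl one), hargs]
        exact hgx

theorem small_listUnion (one : M) (Q : Submodule F M) (honeQ : one ∈ Q) (hone : 0 < one)
    (reps : List M) :
    POVSSmall F M one (Q : Set M) {m | ∃ r ∈ reps, m - r ∈ (Q : Set M)} := by
  induction reps with
  | nil =>
    refine small_mono one (Q : Set M) (fun m hm => ?_) (small_empty one (Q : Set M))
    rcases hm with ⟨r, hr, -⟩
    exact absurd hr List.not_mem_nil
  | cons r t ih =>
    have h : {m | ∃ r' ∈ r :: t, m - r' ∈ (Q : Set M)} =
        {m | m - r ∈ (Q : Set M)} ∪ {m | ∃ r' ∈ t, m - r' ∈ (Q : Set M)} := by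
      ext m
      simp only [Set.mem_setOf_eq, Set.mem_union, List.mem_cons]
      constructor
      · rintro ⟨r', rfl | hr', hm⟩
        exacts [Or.inl hm, Or.inr ⟨r', hr', hm⟩]
      · rintro (hm | ⟨r', hr', hm⟩)
        exacts [⟨r, Or.inl rfl, hm⟩, ⟨r', Or.inr hr', hm⟩]
    rw [h]
    exact small_union one (Q : Set M) Q.zero_mem honeQ hone
      (small_coset one (Q : Set M) r) ih

end Stmt6
namespace Stmt6

open FirstOrder Language

variable {F M : Type} [Field F] [LinearOrder F] [IsStrictOrderedRing F] [AddCommGroup M] [LinearOrder M] [IsOrderedAddMonoid M] [Module F M]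

theorem eval1 (a : Aff F M (Fin 1)) (m : M) :
    a.eval (fun _ => m) = a.coef 0 • m + a.const := by
  rw [Aff.eval, Fin.sum_univ_one]

theorem lin_lt_pos (hsmul : ∀ (c : F) (x : M), 0 < c → 0 < x → 0 < c • x)
    {lam : F} (hl : 0 < lam) (k y : M) :
    lam • y + k < 0 ↔ y < (-lam⁻¹) • k := by
  rw [add_lt_zero_iff', show -k = lam • ((-lam⁻¹) • k) from (smul_bound (ne_of_gt hl) k).symm]
  exact smul_lt_iff' hsmul hl

theorem lin_lt_neg (hsmul : ∀ (c : F) (x : M), 0 < c → 0 < x → 0 < c • x)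
    {lam : F} (hl : lam < 0) (k y : M) :
    lam • y + k < 0 ↔ (-lam⁻¹) • k < y := by
  rw [add_lt_zero_iff', show -k = lam • ((-lam⁻¹) • k) from (smul_bound (ne_of_lt hl) k).symm]
  exact smul_lt_iff_neg' hsmul hl

theorem coset_iff1 (Q : Submodule F M) {lam : F} (hlam : lam ≠ 0) (k m : M) :
    lam • m + k ∈ Q ↔ m - (-lam⁻¹) • k ∈ Q := by
  have hcalc : lam • (m - (-lam⁻¹) • k) = lam • m + k := by
    rw [smul_sub, smul_bound hlam k, sub_neg_eq_add]
  constructor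
  · intro h
    rw [← hcalc] at h
    have h2 := Q.smul_mem lam⁻¹ h
    rwa [smul_smul, inv_mul_cancel₀ hlam, one_smul] at h2
  · intro h
    rw [← hcalc]
    exact Q.smul_mem lam h

def CellOpen (c : List (Lit F M (Fin 1))) : Prop :=
  ∀ l ∈ c, (l.k = Kind.eq ∨ l.k = Kind.inQ) → l.a.coef 0 = 0

def cellRep (c : List (Lit F M (Fin 1))) : M :=
  match c.find? (fun l => decide ((l.k = Kind.eq ∨ l.k = Kind.inQ) ∧ l.a.coef 0 ≠ 0)) with
  | some l => (-(l.a.coef 0)⁻¹) • l.a.const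
  | none => 0

theorem cell_coset_sub {Q : Submodule F M} {c : List (Lit F M (Fin 1))} {l : Lit F M (Fin 1)}
    (hf : c.find? (fun l => decide ((l.k = Kind.eq ∨ l.k = Kind.inQ) ∧ l.a.coef 0 ≠ 0))
      = some l) :
    ∀ m, cellH (Q : Set M) c (fun _ => m) → m - cellRep c ∈ (Q : Set M) := by
  intro m hm
  have hp : (l.k = Kind.eq ∨ l.k = Kind.inQ) ∧ l.a.coef 0 ≠ 0 := by
    have := List.find?_some hf
    simpa using this
  have hlmem := List.mem_of_find?_eq_some hf
  have hold := hm l hlmem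
  rw [cellRep, hf]
  obtain ⟨hk, hlam⟩ := hp
  obtain ⟨k, a⟩ := l
  simp only at hk hlam ⊢
  rcases hk with hk | hk <;> subst hk
  · rw [holds_eq, eval1] at hold
    have := solve_eq hlam hold
    rw [← this, sub_self]
    exact Q.zero_mem
  · rw [holds_inQ, eval1] at hold
    exact (coset_iff1 Q hlam _ _).1 hold

theorem cell_open_translate (hsmul : ∀ (c : F) (x : M), 0 < c → 0 < x → 0 < c • x)
    {Q : Submodule F M}
    (hQdense : ∀ a b : M, a < b → ∃ q ∈ Q, a < q ∧ q < b)
    (one : M) (hone : 0 < one)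
    {c : List (Lit F M (Fin 1))} (hopen : CellOpen c) {m0 : M}
    (hm0 : cellH (Q : Set M) c (fun _ => m0)) (m : M)
    (havoid : ∀ l ∈ c, l.k = Kind.ninQ → l.a.coef 0 ≠ 0 →
      l.a.coef 0 • m + l.a.const ∉ (Q : Set M)) :
    ∃ q ∈ Q, cellH (Q : Set M) c (fun _ => m + q) := by
  set Ls : List M := ((c.filter (fun l => decide (l.k = Kind.lt ∧ l.a.coef 0 < 0))).map
    (fun l => (-(l.a.coef 0)⁻¹) • l.a.const)) with hLs
  set Us : List M := ((c.filter (fun l => decide (l.k = Kind.lt ∧ 0 < l.a.coef 0))).map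
    (fun l => (-(l.a.coef 0)⁻¹) • l.a.const)) with hUs
  have hpair : ∀ lo ∈ Ls, ∀ up ∈ Us, lo < up := by
    intro lo hlo up hup
    rcases List.mem_map.1 hlo with ⟨l1, hl1, rfl⟩
    rcases List.mem_map.1 hup with ⟨l2, hl2, rfl⟩
    rcases List.mem_filter.1 hl1 with ⟨hl1c, h1⟩
    rcases List.mem_filter.1 hl2 with ⟨hl2c, h2⟩
    simp only [decide_eq_true_eq] at h1 h2
    have hh1 := hm0 l1 hl1c
    have hh2 := hm0 l2 hl2c
    obtain ⟨k1, a1⟩ := l1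
    obtain ⟨k2, a2⟩ := l2
    simp only at h1 h2
    obtain ⟨hk1, hn1⟩ := h1
    obtain ⟨hk2, hn2⟩ := h2
    subst hk1; subst hk2
    rw [holds_lt, eval1] at hh1 hh2
    exact lt_trans ((lin_lt_neg hsmul hn1 _ _).1 hh1) ((lin_lt_pos hsmul hn2 _ _).1 hh2)
  obtain ⟨u₀, v₀, huv, hwin⟩ := exists_window one hone Ls Us hpair
  obtain ⟨q, hqQ, h1, h2⟩ := hQdense (u₀ - m) (v₀ - m) (sub_lt_sub_right huv m)
  refine ⟨q, hqQ, ?_⟩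
  have hy1 : u₀ < m + q := sub_lt_iff_lt_add'.1 h1
  have hy2 : m + q < v₀ := lt_sub_iff_add_lt'.1 h2
  obtain ⟨hLss, hUss⟩ := hwin (m + q) hy1 hy2
  intro l hl
  have hold0 := hm0 l hl
  obtain ⟨k, a⟩ := l
  cases k with
  | lt =>
    rcases eq_or_ne (a.coef 0) 0 with h0 | h0
    · rw [holds_lt, eval1, h0, zero_smul, zero_add] at hold0 ⊢
      exact hold0
    · rcases lt_or_gt_of_ne h0 with hneg | hpos
      · rw [holds_lt, eval1, lin_lt_neg hsmul hneg]
        exact hLss _ (List.mem_map.2 ⟨⟨Kind.lt, a⟩,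
          List.mem_filter.2 ⟨hl, by simp [hneg]⟩, rfl⟩)
      · rw [holds_lt, eval1, lin_lt_pos hsmul hpos]
        exact hUss _ (List.mem_map.2 ⟨⟨Kind.lt, a⟩,
          List.mem_filter.2 ⟨hl, by simp [hpos]⟩, rfl⟩)
  | eq =>
    have h0 : a.coef 0 = 0 := hopen _ hl (Or.inl rfl)
    rw [holds_eq, eval1, h0, zero_smul, zero_add] at hold0 ⊢
    exact hold0
  | inQ =>
    have h0 : a.coef 0 = 0 := hopen _ hl (Or.inr rfl)
    rw [holds_inQ, eval1, h0, zero_smul, zero_add] at hold0 ⊢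
    exact hold0
  | ninQ =>
    rcases eq_or_ne (a.coef 0) 0 with h0 | h0
    · rw [holds_ninQ, eval1, h0, zero_smul, zero_add] at hold0 ⊢
      exact hold0
    · rw [holds_ninQ, eval1]
      intro hmem
      have hsplit : a.coef 0 • (m + q) + a.const = a.coef 0 • q + (a.coef 0 • m + a.const) := by
        rw [smul_add]; abel
      rw [hsplit, SetLike.mem_coe, mem_add_smul_iff Q hqQ] at hmem
      exact havoid _ hl rfl h0 (SetLike.mem_coe.2 hmem)

theorem definable1_dnf (hsmul : ∀ (c : F) (x : M), 0 < c → 0 < x → 0 < c • x)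
    {one : M} {Q : Submodule F M} (hQproper : (Q : Set M) ≠ Set.univ)
    (hQdense : ∀ a b : M, a < b → ∃ q ∈ Q, a < q ∧ q < b) (hone : 0 < one)
    {S : Set M} (hS : POVSDefinable1 F M one (Q : Set M) S) :
    ∃ d : List (List (Lit F M (Fin 1))), ∀ m : M, m ∈ S ↔ dnfH (Q : Set M) d (fun _ => m) := by
  letI := LPStruc F M one (Q : Set M)
  have hS' : Set.Definable (Set.univ : Set M) (LP F) {x : Fin 1 → M | x 0 ∈ S} := hS
  obtain ⟨φ, hφ⟩ := hS'
  have hGood := bf_good one hsmul hQproper hQdense hone (n := 0) φ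
  have h2 := Good.remap (Q : Set M) (Equiv.sumEmpty (Fin 1) (Fin 0)) hGood
  obtain ⟨d, hd⟩ := h2
  refine ⟨d, fun m => ?_⟩
  have hset := Set.ext_iff.1 hd (fun _ => m)
  simp only [Set.mem_setOf_eq] at hset
  have hkey : RealBF one (Q : Set M) φ
      (((fun _ => m) ∘ (Equiv.sumEmpty (Fin 1) (Fin 0))) ∘ Sum.inl)
      (((fun _ => m) ∘ (Equiv.sumEmpty (Fin 1) (Fin 0))) ∘ Sum.inr) ↔ m ∈ S := by
    have h1 : (((fun _ => m) ∘ (Equiv.sumEmpty (Fin 1) (Fin 0))) ∘ Sum.inl)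
        = (fun _ => m : Fin 1 → M) := rfl
    have hz : ((fun _ => m : Fin 1 → M) ∈ {x : Fin 1 → M | x 0 ∈ S}) ↔
        ((fun _ => m : Fin 1 → M) ∈ setOf φ.Realize) := by rw [hφ]; rfl
    simp only [Set.mem_setOf_eq] at hz
    rw [show (RealBF one (Q : Set M) φ
      (((fun _ => m) ∘ (Equiv.sumEmpty (Fin 1) (Fin 0))) ∘ Sum.inl)
      (((fun _ => m) ∘ (Equiv.sumEmpty (Fin 1) (Fin 0))) ∘ Sum.inr)) =
      (φ.Realize (fun _ => m : Fin 1 → M)) from ?_]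
    · exact hz.symm
    · rw [h1]
      show (BoundedFormula.Realize φ _ _ : Prop) = (BoundedFormula.Realize φ _ _ : Prop)
      congr 1
      exact Subsingleton.elim _ _
  rw [← hkey]
  exact hset

end Stmt6
/-- Let `a < b` in `M ∪ {-∞,+∞}` and let `S ⊆ (a,b)` be definable and
invariant under the coset equivalence relation. If `S` is large, then `(a,b) \ S` is
small. -/
theorem statement6
    (hsmul : ∀ (c : F) (x : M), 0 < c → 0 < x → 0 < c • x)
    (one : M) (hone : 0 < one)
    (Q : Submodule F M) (hQproper : (Q : Set M) ≠ Set.univ) (honeQ : one ∈ Q)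
    (hQdense : ∀ a b : M, a < b → ∃ q ∈ Q, a < q ∧ q < b)
    (a b : WithBot (WithTop M)) (hab : a < b)
    (S : Set M) (hsub : S ⊆ extIoo M a b)
    (hS : POVSDefinable1 F M one (Q : Set M) S)
    (hinv : ∀ x ∈ S, ∀ q ∈ Q, x + q ∈ extIoo M a b → x + q ∈ S)
    (hlarge : ¬ POVSSmall F M one (Q : Set M) S) :
    POVSSmall F M one (Q : Set M) (extIoo M a b \ S) := by
  classical
  obtain ⟨d, hd⟩ := Stmt6.definable1_dnf hsmul hQproper hQdense hone hS
  by_cases hA : ∃ c ∈ d, Stmt6.CellOpen c ∧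
      ∃ m0 : M, Stmt6.cellH (Q : Set M) c (fun _ => m0)
  · obtain ⟨c, hcd, hopen, m0, hm0⟩ := hA
    refine Stmt6.small_mono one (Q : Set M) ?_ (Stmt6.small_listUnion one Q honeQ hone
      ((c.filter (fun l => decide (l.k = Stmt6.Kind.ninQ ∧ l.a.coef 0 ≠ 0))).map
        (fun l => (-(l.a.coef 0)⁻¹) • l.a.const)))
    intro m hm
    by_contra hnot
    simp only [Set.mem_setOf_eq] at hnot
    push_neg at hnot
    have havoid : ∀ l ∈ c, l.k = Stmt6.Kind.ninQ → l.a.coef 0 ≠ 0 →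
        l.a.coef 0 • m + l.a.const ∉ (Q : Set M) := by
      intro l hl hk h0 hmem
      have hr := hnot ((-(l.a.coef 0)⁻¹) • l.a.const)
        (List.mem_map.2 ⟨l, List.mem_filter.2 ⟨hl, by simp [hk, h0]⟩, rfl⟩)
      exact hr ((Stmt6.coset_iff1 Q h0 _ _).1 hmem)
    obtain ⟨q, hqQ, hcell⟩ :=
      Stmt6.cell_open_translate hsmul hQdense one hone hopen hm0 m havoid
    have hmqS : m + q ∈ S := (hd (m + q)).2 ⟨c, hcd, hcell⟩
    have hmS : m ∈ S := by
      have h2 := hinv (m + q) hmqS (-q) (Q.neg_mem hqQ)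
        (by rw [add_neg_cancel_right]; exact hm.1)
      rwa [add_neg_cancel_right] at h2
    exact hm.2 hmS
  · exfalso
    apply hlarge
    push_neg at hA
    refine Stmt6.small_mono one (Q : Set M) ?_
      (Stmt6.small_listUnion one Q honeQ hone (d.map Stmt6.cellRep))
    intro s hs
    have hmem : ∃ c ∈ d, Stmt6.cellH (Q : Set M) c (fun _ => s) := (hd s).1 hs
    obtain ⟨c, hcd, hcell⟩ := hmem
    rcases hfc : c.find? (fun l => decide ((l.k = Stmt6.Kind.eq ∨ l.k = Stmt6.Kind.inQ)
        ∧ l.a.coef 0 ≠ 0)) with _ | l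
    · have hopen : Stmt6.CellOpen c := by
        intro l hl hk
        by_contra h0
        exact absurd (by simp [hk, h0] : (fun l => decide ((l.k = Stmt6.Kind.eq ∨
          l.k = Stmt6.Kind.inQ) ∧ l.a.coef 0 ≠ 0)) l = true)
          ((List.find?_eq_none.1 hfc) l hl)
      exact absurd hcell (hA c hcd hopen s)
    · exact ⟨Stmt6.cellRep c, List.mem_map.2 ⟨c, hcd, rfl⟩, Stmt6.cell_coset_sub hfc s hcell⟩
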